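/- Let m ≥ 2 and p ≥ 2 be integers and let a, b, a′, b′ ≥ 0 be integers with b ≤ a, 2a ≤ p + 1, 2a ≤ 4m − p + 1, |a − a′| + |b − b′| = 1, satisfying the equation 2m − p − 2 − 2b′ + 2b + a′² − a² + b′² − b² + 2(m+1)(a + b − a′ − b′) = 0. Then a′ = a − 1, b′ = b, and 4m − p = 2a − 1. (This is Case 2, k = 1 and k′ = 0, of the numerical analysis in the proof of the main theorem: among the four possible neighbours (a′,b′) of (a,b) in ℤ², only (a−1, b) is possible, and then 4m − p = 2a − 1.) -/
import Mathlib

/-!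
Statement 13: Case 2 (`k = 1`, `k′ = 0`) of the numerical analysis in the proof of the
main theorem: only the neighbour `(a′, b′) = (a−1, b)` of `(a, b)` is possible, and
then `4m − p = 2a − 1`.
-/

theorem case_two_analysis (m p a b a' b' : ℤ) (hm : 2 ≤ m) (hp : 2 ≤ p)
    (ha : 0 ≤ a) (hb : 0 ≤ b) (ha' : 0 ≤ a') (hb' : 0 ≤ b')
    (hba : b ≤ a) (h2a : 2 * a ≤ p + 1) (h2a' : 2 * a ≤ 4 * m - p + 1)
    (hnb : |a - a'| + |b - b'| = 1)
    (heq : 2 * m - p - 2 - 2 * b' + 2 * b + a' ^ 2 - a ^ 2 + b' ^ 2 - b ^ 2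
        + 2 * (m + 1) * (a + b - a' - b') = 0) :
    a' = a - 1 ∧ b' = b ∧ 4 * m - p = 2 * a - 1 := by
  have hc : (a' = a + 1 ∧ b' = b) ∨ (a' = a - 1 ∧ b' = b) ∨
      (a' = a ∧ b' = b + 1) ∨ (a' = a ∧ b' = b - 1) := by
    rcases abs_cases (a - a') with ⟨h1, _⟩ | ⟨h1, _⟩ <;>
      rcases abs_cases (b - b') with ⟨h2, _⟩ | ⟨h2, _⟩ <;> omega
  rcases hc with ⟨rfl, rfl⟩ | ⟨rfl, rfl⟩ | ⟨rfl, rfl⟩ | ⟨rfl, rfl⟩ <;>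
    ring_nf at heq <;> omega
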